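/- For s ∈ (0, ∞), let α(s) = (s, (s/6)(2 sinh(2 ln s) − cosh(2 ln s)), (s/6)(2 cosh(2 ln s) − sinh(2 ln s))). Then α is an admissible spacelike curve in the pseudo-Galilean space G¹₃ with α'(s) = (1, (1/2)cosh(2 ln s), (1/2)sinh(2 ln s)), curvature κ(s) = 1/s, torsion τ(s) = −2/s, tangent T(s) = α'(s), principal normal N(s) = (0, sinh(2 ln s), cosh(2 ln s)), and binormal B(s) = (0, −cosh(2 ln s), −sinh(2 ln s)). -/

import Mathlib

/-- The second coordinate of the curve of Example 4.1. -/
noncomputable def yEx : ℝ → ℝ := fun s =>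
  s / 6 * (2 * Real.sinh (2 * Real.log s) - Real.cosh (2 * Real.log s))

/-- The third coordinate of the curve of Example 4.1. -/
noncomputable def zEx : ℝ → ℝ := fun s =>
  s / 6 * (2 * Real.cosh (2 * Real.log s) - Real.sinh (2 * Real.log s))

open Real Set

lemma hu' {s : ℝ} (hs : 0 < s) :
    HasDerivAt (fun t : ℝ => 2 * Real.log t) (2 / s) s := by
  simpa [div_eq_mul_inv, mul_comm] using (Real.hasDerivAt_log hs.ne').const_mul 2

lemma hy1 {s : ℝ} (hs : 0 < s) :
    HasDerivAt yEx (1 / 2 * Real.cosh (2 * Real.log s)) s := by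
  have h := ((hasDerivAt_id s).div_const 6).mul
    ((((hu' hs).sinh).const_mul 2).sub ((hu' hs).cosh))
  refine h.congr_deriv ?_
  simp only [Pi.sub_apply, id_eq]
  have hs0 := hs.ne'
  have h1 : Real.cosh (2 * Real.log s) ^ 2 - Real.sinh (2 * Real.log s) ^ 2 = 1 :=
    Real.cosh_sq_sub_sinh_sq _
  field_simp
  ring

lemma hz1 {s : ℝ} (hs : 0 < s) :
    HasDerivAt zEx (1 / 2 * Real.sinh (2 * Real.log s)) s := by
  have h := ((hasDerivAt_id s).div_const 6).mul
    ((((hu' hs).cosh).const_mul 2).sub ((hu' hs).sinh))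
  refine h.congr_deriv ?_
  simp only [Pi.sub_apply, id_eq]
  have hs0 := hs.ne'
  field_simp
  ring

lemma dy1 : ∀ s ∈ Set.Ioi (0:ℝ), deriv yEx s = 1 / 2 * Real.cosh (2 * Real.log s) :=
  fun s hs => (hy1 hs).deriv

lemma dz1 : ∀ s ∈ Set.Ioi (0:ℝ), deriv zEx s = 1 / 2 * Real.sinh (2 * Real.log s) :=
  fun s hs => (hz1 hs).deriv

lemma dy2 : ∀ s ∈ Set.Ioi (0:ℝ),
    deriv (deriv yEx) s = Real.sinh (2 * Real.log s) / s := by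
  intro s hs
  have he : deriv yEx =ᶠ[nhds s] fun t => 1 / 2 * Real.cosh (2 * Real.log t) :=
    Filter.eventuallyEq_of_mem (isOpen_Ioi.mem_nhds hs) dy1
  rw [he.deriv_eq]
  have h := ((hu' hs).cosh).const_mul (1/2 : ℝ)
  rw [h.deriv]
  have hs0 := (show (0:ℝ) < s from hs).ne'
  field_simp

lemma dz2 : ∀ s ∈ Set.Ioi (0:ℝ),
    deriv (deriv zEx) s = Real.cosh (2 * Real.log s) / s := by
  intro s hs
  have he : deriv zEx =ᶠ[nhds s] fun t => 1 / 2 * Real.sinh (2 * Real.log t) :=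
    Filter.eventuallyEq_of_mem (isOpen_Ioi.mem_nhds hs) dz1
  rw [he.deriv_eq]
  have h := ((hu' hs).sinh).const_mul (1/2 : ℝ)
  rw [h.deriv]
  have hs0 := (show (0:ℝ) < s from hs).ne'
  field_simp

lemma dy3 : ∀ s ∈ Set.Ioi (0:ℝ),
    deriv (deriv (deriv yEx)) s =
      (2 * Real.cosh (2 * Real.log s) - Real.sinh (2 * Real.log s)) / s ^ 2 := by
  intro s hs
  have he : deriv (deriv yEx) =ᶠ[nhds s] fun t => Real.sinh (2 * Real.log t) / t :=
    Filter.eventuallyEq_of_mem (isOpen_Ioi.mem_nhds hs) dy2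
  rw [he.deriv_eq]
  have h := ((hu' hs).sinh).div (hasDerivAt_id s) (hs.ne')
  have h2 := h.deriv
  simp only [id_eq] at h2
  rw [show (fun t => Real.sinh (2 * Real.log t) / t) = ((fun x => Real.sinh (2 * Real.log x)) / id) from rfl, h2]
  have hs0 := (show (0:ℝ) < s from hs).ne'
  field_simp

lemma dz3 : ∀ s ∈ Set.Ioi (0:ℝ),
    deriv (deriv (deriv zEx)) s =
      (2 * Real.sinh (2 * Real.log s) - Real.cosh (2 * Real.log s)) / s ^ 2 := by
  intro s hs
  have he : deriv (deriv zEx) =ᶠ[nhds s] fun t => Real.cosh (2 * Real.log t) / t :=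
    Filter.eventuallyEq_of_mem (isOpen_Ioi.mem_nhds hs) dz2
  rw [he.deriv_eq]
  have h := ((hu' hs).cosh).div (hasDerivAt_id s) (hs.ne')
  have h2 := h.deriv
  simp only [id_eq] at h2
  rw [show (fun t => Real.cosh (2 * Real.log t) / t) = ((fun x => Real.cosh (2 * Real.log x)) / id) from rfl, h2]
  have hs0 := (show (0:ℝ) < s from hs).ne'
  field_simp

lemma hlog3 : ContDiffOn ℝ 3 (fun s : ℝ => 2 * Real.log s) (Set.Ioi 0) := by
  have := (Real.contDiffOn_log (n := 3)).mono
    (fun x hx => Set.mem_compl_singleton_iff.mpr (ne_of_gt hx))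
  exact (contDiffOn_const).mul this

lemma cdy : ContDiffOn ℝ 3 yEx (Set.Ioi 0) := by
  have hs := Real.contDiff_sinh.comp_contDiffOn hlog3
  have hc := Real.contDiff_cosh.comp_contDiffOn hlog3
  exact ((contDiffOn_id.div_const 6)).mul ((contDiffOn_const.mul hs).sub hc)

lemma cdz : ContDiffOn ℝ 3 zEx (Set.Ioi 0) := by
  have hs := Real.contDiff_sinh.comp_contDiffOn hlog3
  have hc := Real.contDiff_cosh.comp_contDiffOn hlog3
  exact ((contDiffOn_id.div_const 6)).mul ((contDiffOn_const.mul hc).sub hs)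

theorem stmt_12 :
    ContDiffOn ℝ 3 yEx (Set.Ioi 0) ∧ ContDiffOn ℝ 3 zEx (Set.Ioi 0) ∧
    (∀ s ∈ Set.Ioi (0 : ℝ),
      deriv yEx s = 1 / 2 * Real.cosh (2 * Real.log s) ∧
      deriv zEx s = 1 / 2 * Real.sinh (2 * Real.log s) ∧
      (deriv (deriv yEx) s) ^ 2 - (deriv (deriv zEx) s) ^ 2 ≠ 0 ∧
      Real.sqrt |(deriv (deriv yEx) s) ^ 2 - (deriv (deriv zEx) s) ^ 2| = 1 / s ∧
      (deriv (deriv yEx) s * deriv (deriv (deriv zEx)) s -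
        deriv (deriv (deriv yEx)) s * deriv (deriv zEx) s) / (1 / s) ^ 2 = -2 / s ∧
      deriv (deriv yEx) s / (1 / s) = Real.sinh (2 * Real.log s) ∧
      deriv (deriv zEx) s / (1 / s) = Real.cosh (2 * Real.log s)) ∧
    ∃ ε : ℝ, (ε = 1 ∨ ε = -1) ∧ ∀ s ∈ Set.Ioi (0 : ℝ),
      |(deriv (deriv yEx) s) ^ 2 - (deriv (deriv zEx) s) ^ 2| =
        ε * ((deriv (deriv yEx) s) ^ 2 - (deriv (deriv zEx) s) ^ 2) ∧
      ε * deriv (deriv zEx) s / (1 / s) = -Real.cosh (2 * Real.log s) ∧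
      ε * deriv (deriv yEx) s / (1 / s) = -Real.sinh (2 * Real.log s) := by
  have key : ∀ s ∈ Set.Ioi (0:ℝ),
      (deriv (deriv yEx) s) ^ 2 - (deriv (deriv zEx) s) ^ 2 = -(1 / s ^ 2) := by
    intro s hs
    rw [dy2 s hs, dz2 s hs]
    have hs0 := (show (0:ℝ) < s from hs).ne'
    have h1 : Real.cosh (2 * Real.log s) ^ 2 - Real.sinh (2 * Real.log s) ^ 2 = 1 :=
      Real.cosh_sq_sub_sinh_sq _
    field_simp
    nlinarith [h1]
  refine ⟨cdy, cdz, fun s hs => ?_, -1, Or.inr rfl, fun s hs => ?_⟩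
  · have hs0 : (0:ℝ) < s := hs
    have hsne := hs0.ne'
    refine ⟨dy1 s hs, dz1 s hs, ?_, ?_, ?_, ?_, ?_⟩
    · rw [key s hs]
      exact neg_ne_zero.mpr (by positivity)
    · rw [key s hs, abs_neg, abs_of_pos (by positivity)]
      rw [show (1:ℝ) / s ^ 2 = (1/s)^2 by ring, Real.sqrt_sq (by positivity)]
    · rw [dy2 s hs, dz2 s hs, dy3 s hs, dz3 s hs]
      have h1 : Real.cosh (2 * Real.log s) ^ 2 - Real.sinh (2 * Real.log s) ^ 2 = 1 :=
        Real.cosh_sq_sub_sinh_sq _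
      have h2 : Real.sinh (2*Real.log s) * (2*Real.sinh (2*Real.log s) - Real.cosh (2*Real.log s))
          - (2*Real.cosh (2*Real.log s) - Real.sinh (2*Real.log s)) * Real.cosh (2*Real.log s) = -2 := by
        nlinarith [h1]
      field_simp
      linear_combination (-2) * h1
    · rw [dy2 s hs]; field_simp
    · rw [dz2 s hs]; field_simp
  · have hs0 : (0:ℝ) < s := hs
    have hsne := hs0.ne'
    refine ⟨?_, ?_, ?_⟩
    · rw [key s hs, abs_neg, abs_of_pos (by positivity)]; ring
    · rw [dz2 s hs]; field_simp
    · rw [dy2 s hs]; field_simp
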